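/- Define $s:(-2,\infty) \to \mathbb{R}$ by $s(u) = \operatorname{sgn}(u)\sqrt{4 - (u+2)^2 e^{-u}}$ (so $s(0)=0$). Then $s$ is differentiable at every point of $(-2,\infty)$; for $u \neq 0$ one has $s'(u) = \dfrac{u(u+2)e^{-u}}{2 s(u)}$, and $s'(0) = 1$. In particular $s$ is continuously differentiable in a neighborhood of $0$. -/

import Mathlib

open Real Set Filter Topology

noncomputable def lvG : ℝ → ℝ := fun u => 4 - (u + 2) ^ 2 * Real.exp (-u)

lemma lvG_hasDerivAt (u : ℝ) :
    HasDerivAt lvG (u * (u + 2) * Real.exp (-u)) u := by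
  have h1 : HasDerivAt (fun v : ℝ => (v + 2) ^ 2) (2 * (u + 2)) u := by
    have := ((hasDerivAt_id u).add_const 2).pow 2
    simpa [Pi.pow_def] using this
  have h2 : HasDerivAt (fun v : ℝ => Real.exp (-v)) (-Real.exp (-u)) u := by
    have := (hasDerivAt_id u).neg.exp
    simpa using this
  have := (hasDerivAt_const (x := u) (c := (4 : ℝ))).sub (h1.mul h2)
  convert this using 1
  · rfl
  · rfl
  · rfl
  ring

lemma lvG_pos {u : ℝ} (h2 : -2 < u) (h0 : u ≠ 0) : 0 < lvG u := by
  have hlt : u / 2 + 1 < Real.exp (u / 2) := Real.add_one_lt_exp (by simpa using h0)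
  have hpos : (0 : ℝ) < u / 2 + 1 := by linarith
  have hsq : Real.exp (u / 2) * Real.exp (u / 2) = Real.exp u := by
    rw [← Real.exp_add]; ring_nf
  have he : Real.exp (-u) * Real.exp u = 1 := by
    rw [← Real.exp_add]; simp
  have hE : 0 < Real.exp (-u) := Real.exp_pos _
  have key : (u + 2) ^ 2 < 4 * Real.exp u := by nlinarith
  have : (u + 2) ^ 2 * Real.exp (-u) < 4 := by nlinarith
  simpa [lvG] using by linarith

lemma lvG_zero : lvG 0 = 0 := by norm_num [lvG]

lemma s_eq (s : ℝ → ℝ)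
    (hs : ∀ u : ℝ, s u = Real.sign u * Real.sqrt (4 - (u + 2) ^ 2 * Real.exp (-u)))
    (u : ℝ) : s u = Real.sign u * Real.sqrt (lvG u) := hs u

lemma s_ne_zero (s : ℝ → ℝ)
    (hs : ∀ u : ℝ, s u = Real.sign u * Real.sqrt (4 - (u + 2) ^ 2 * Real.exp (-u)))
    {u : ℝ} (h2 : -2 < u) (h0 : u ≠ 0) : s u ≠ 0 := by
  rw [s_eq s hs]
  exact mul_ne_zero (fun h => h0 (Real.sign_eq_zero_iff.1 h)) (ne_of_gt (Real.sqrt_pos.2 (lvG_pos h2 h0)))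

lemma hasDerivAt_off (s : ℝ → ℝ)
    (hs : ∀ u : ℝ, s u = Real.sign u * Real.sqrt (4 - (u + 2) ^ 2 * Real.exp (-u)))
    {u : ℝ} (h2 : -2 < u) (h0 : u ≠ 0) :
    HasDerivAt s (u * (u + 2) * Real.exp (-u) / (2 * s u)) u := by
  have hg := lvG_pos h2 h0
  have hgne : lvG u ≠ 0 := ne_of_gt hg
  have hsqrt : HasDerivAt (fun v => Real.sqrt (lvG v))
      (u * (u + 2) * Real.exp (-u) / (2 * Real.sqrt (lvG u))) u :=
    (lvG_hasDerivAt u).sqrt hgne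
  rcases h0.lt_or_gt with hneg | hpos
  · have hev : s =ᶠ[nhds u] fun v => -Real.sqrt (lvG v) := by
      filter_upwards [Ioo_mem_nhds h2 hneg] with v hv
      rw [s_eq s hs, Real.sign_of_neg hv.2]
      ring
    rw [hev.hasDerivAt_iff]
    have hsu : s u = -Real.sqrt (lvG u) := by
      rw [s_eq s hs, Real.sign_of_neg hneg]; ring
    have := hsqrt.neg
    convert this using 1
    · rfl
    rw [hsu]
    have : Real.sqrt (lvG u) ≠ 0 := ne_of_gt (Real.sqrt_pos.2 hg)
    field_simp
  · have hev : s =ᶠ[nhds u] fun v => Real.sqrt (lvG v) := by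
      filter_upwards [Ioi_mem_nhds hpos] with v hv
      rw [s_eq s hs, Real.sign_of_pos hv]
      ring
    rw [hev.hasDerivAt_iff]
    have hsu : s u = Real.sqrt (lvG u) := by
      rw [s_eq s hs, Real.sign_of_pos hpos]; ring
    rw [hsu]
    exact hsqrt

lemma lvG_div_tendsto :
    Tendsto (fun u => lvG u / u ^ 2) (nhdsWithin 0 {(0:ℝ)}ᶜ) (nhds 1) := by
  apply HasDerivAt.lhopital_zero_nhdsNE (f' := fun u => u * (u + 2) * Real.exp (-u))
      (g' := fun u => 2 * u)
  · exact Filter.Eventually.of_forall fun x => lvG_hasDerivAt x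
  · exact Filter.Eventually.of_forall fun x => by
      simpa [Pi.pow_def] using ((hasDerivAt_id x).pow 2)
  · filter_upwards [self_mem_nhdsWithin] with x hx
    simpa using hx
  · have hc : ContinuousAt lvG 0 := by
      unfold lvG; fun_prop
    have := hc.tendsto
    rw [lvG_zero] at this
    exact this.mono_left nhdsWithin_le_nhds
  · have : Tendsto (fun u : ℝ => u ^ 2) (nhds 0) (nhds 0) := by
      simpa using (continuous_pow 2).tendsto (0:ℝ)
    exact this.mono_left nhdsWithin_le_nhds
  · have hc : Tendsto (fun u : ℝ => (u + 2) * Real.exp (-u) / 2) (nhds 0) (nhds 1) := by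
      have : ContinuousAt (fun u : ℝ => (u + 2) * Real.exp (-u) / 2) 0 := by fun_prop
      have h := this.tendsto
      norm_num at h
      exact h
    apply Tendsto.congr' _ (hc.mono_left nhdsWithin_le_nhds)
    filter_upwards [self_mem_nhdsWithin] with x hx
    have hx' : x ≠ 0 := hx
    field_simp


lemma s_div_eq (s : ℝ → ℝ)
    (hs : ∀ u : ℝ, s u = Real.sign u * Real.sqrt (4 - (u + 2) ^ 2 * Real.exp (-u)))
    {u : ℝ} (h2 : -2 < u) (h0 : u ≠ 0) :
    s u / u = Real.sqrt (lvG u / u ^ 2) := by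
  have hg : 0 ≤ lvG u := (lvG_pos h2 h0).le
  rw [Real.sqrt_div hg, Real.sqrt_sq_eq_abs, s_eq s hs]
  rcases h0.lt_or_gt with h | h
  · rw [Real.sign_of_neg h, abs_of_neg h]
    ring
  · rw [Real.sign_of_pos h, abs_of_pos h]
    ring

lemma lv_hasDerivAt_zero (s : ℝ → ℝ)
    (hs : ∀ u : ℝ, s u = Real.sign u * Real.sqrt (4 - (u + 2) ^ 2 * Real.exp (-u))) :
    HasDerivAt s 1 0 := by
  rw [hasDerivAt_iff_tendsto_slope]
  have hs0 : s 0 = 0 := by rw [hs 0]; simp [Real.sign_zero]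
  have h1 : Tendsto (fun u => Real.sqrt (lvG u / u ^ 2)) (nhdsWithin 0 {(0:ℝ)}ᶜ) (nhds 1) := by
    have := (Real.continuous_sqrt.tendsto 1).comp lvG_div_tendsto
    simpa [Function.comp_def] using this
  apply Tendsto.congr' _ h1
  filter_upwards [self_mem_nhdsWithin,
    eventually_nhdsWithin_of_eventually_nhds
      (eventually_nhds_iff.2 ⟨Ioo (-2) 2, fun v hv => hv.1, isOpen_Ioo, by norm_num⟩)]
    with u h0 h2
  rw [slope_def_field, hs0]
  rw [← s_div_eq s hs h2 h0]
  field_simp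
  simp only [sub_zero]

lemma tendsto_deriv_zero (s : ℝ → ℝ)
    (hs : ∀ u : ℝ, s u = Real.sign u * Real.sqrt (4 - (u + 2) ^ 2 * Real.exp (-u))) :
    Tendsto (deriv s) (nhdsWithin 0 {(0:ℝ)}ᶜ) (nhds 1) := by
  have hnum : Tendsto (fun u : ℝ => (u + 2) * Real.exp (-u)) (nhds 0) (nhds 2) := by
    have : ContinuousAt (fun u : ℝ => (u + 2) * Real.exp (-u)) 0 := by fun_prop
    have h := this.tendsto
    norm_num at h
    exact h
  have hden : Tendsto (fun u => 2 * Real.sqrt (lvG u / u ^ 2))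
      (nhdsWithin 0 {(0:ℝ)}ᶜ) (nhds 2) := by
    have := ((Real.continuous_sqrt.tendsto 1).comp lvG_div_tendsto).const_mul 2
    norm_num at this
    exact this
  have h1 : Tendsto (fun u => (u + 2) * Real.exp (-u) / (2 * Real.sqrt (lvG u / u ^ 2)))
      (nhdsWithin 0 {(0:ℝ)}ᶜ) (nhds 1) := by
    have := (hnum.mono_left nhdsWithin_le_nhds).div hden (by norm_num)
    norm_num at this
    exact this
  apply Tendsto.congr' _ h1
  filter_upwards [self_mem_nhdsWithin,
    eventually_nhdsWithin_of_eventually_nhds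
      (eventually_nhds_iff.2 ⟨Ioo (-2) 2, fun v hv => hv.1, isOpen_Ioo, by norm_num⟩)]
    with u h0 h2
  have h0' : (u : ℝ) ≠ 0 := h0
  have hd := hasDerivAt_off s hs h2 h0'
  rw [hd.deriv]
  have hgpos : 0 < Real.sqrt (lvG u) := Real.sqrt_pos.2 (lvG_pos h2 h0')
  have habs : Real.sqrt (lvG u / u ^ 2) = Real.sqrt (lvG u) / |u| := by
    rw [Real.sqrt_div (lvG_pos h2 h0').le, Real.sqrt_sq_eq_abs]
  rw [habs, s_eq s hs]
  rcases h0'.lt_or_gt with h | h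
  · rw [Real.sign_of_neg h, abs_of_neg h]
    field_simp
  · rw [Real.sign_of_pos h, abs_of_pos h]
    field_simp

theorem lv_change_of_variables_C1
    (s : ℝ → ℝ)
    (hs : ∀ u : ℝ, s u = Real.sign u * Real.sqrt (4 - (u + 2) ^ 2 * Real.exp (-u))) :
    (∀ u ∈ Set.Ioi (-2 : ℝ), DifferentiableAt ℝ s u) ∧
    (∀ u ∈ Set.Ioi (-2 : ℝ), u ≠ 0 →
      HasDerivAt s (u * (u + 2) * Real.exp (-u) / (2 * s u)) u) ∧
    HasDerivAt s 1 0 ∧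
    ∃ ε > (0 : ℝ), ContDiffOn ℝ 1 s (Metric.ball (0 : ℝ) ε) := by
  have hzero := lv_hasDerivAt_zero s hs
  have hball : Metric.ball (0 : ℝ) 1 = Ioo (-1 : ℝ) 1 := by
    rw [Real.ball_eq_Ioo]; norm_num
  refine ⟨?_, fun u hu h0 => hasDerivAt_off s hs hu h0, hzero, 1, one_pos, ?_⟩
  · intro u hu
    by_cases h0 : u = 0
    · subst h0; exact hzero.differentiableAt
    · exact (hasDerivAt_off s hs hu h0).differentiableAt
  · rw [show ((1 : WithTop ℕ∞)) = 0 + 1 from rfl,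
      contDiffOn_succ_iff_deriv_of_isOpen Metric.isOpen_ball]
    have hmem : ∀ u ∈ Metric.ball (0:ℝ) 1, -2 < u := by
      intro u hu
      rw [hball] at hu
      linarith [hu.1]
    refine ⟨?_, ?_, ?_⟩
    · intro u hu
      by_cases h0 : u = 0
      · subst h0; exact hzero.differentiableAt.differentiableWithinAt
      · exact (hasDerivAt_off s hs (hmem u hu) h0).differentiableAt.differentiableWithinAt
    · intro h; simp at h
    · rw [contDiffOn_zero]
      intro u hu
      apply ContinuousAt.continuousWithinAt
      by_cases h0 : u = 0
      · subst h0
        have hd0 : deriv s 0 = 1 := hzero.deriv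
        rw [ContinuousAt, hd0, ← nhdsNE_sup_pure (0:ℝ), tendsto_sup]
        exact ⟨tendsto_deriv_zero s hs,
          by simpa [hd0] using tendsto_pure_nhds (deriv s) 0⟩
      · have h2 : -2 < u := hmem u hu
        have hev : deriv s =ᶠ[nhds u]
            fun v => v * (v + 2) * Real.exp (-v) / (2 * s v) := by
          filter_upwards [(isOpen_Ioi.inter isOpen_compl_singleton).mem_nhds
            (⟨h2, h0⟩ : u ∈ Ioi (-2:ℝ) ∩ {(0:ℝ)}ᶜ)] with v hv
          exact (hasDerivAt_off s hs hv.1 hv.2).deriv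
        have hscont : ContinuousAt s u :=
          (hasDerivAt_off s hs h2 h0).differentiableAt.continuousAt
        have hF : ContinuousAt (fun v => v * (v + 2) * Real.exp (-v) / (2 * s v)) u := by
          apply ContinuousAt.div
          · fun_prop
          · exact continuousAt_const.mul hscont
          · exact mul_ne_zero two_ne_zero (s_ne_zero s hs h2 h0)
        exact hF.congr hev.symm
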